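/- arXiv:1310.7640 — 4 statements merged into one kernel-verified Lean document; each statement's English description precedes it below -/
import Mathlib

section
/- Let k be an algebraically closed field of characteristic zero, let s, t ≥ 1, let μ = (μ₁,…,μ_s) and ν = (ν₁,…,ν_t) be tuples of positive integers, and let d = gcd(μ₁,…,μ_s,ν₁,…,ν_t). Then in the polynomial ring k[x₁,…,x_s,y₁,…,y_t] one has the factorization x^μ − y^ν = ∏_{ζ ∈ k, ζ^d = 1} (x^{μ/d} − ζ·y^{ν/d}), where the product runs over all d-th roots of unity ζ in k; moreover each factor x^{μ/d} − ζ·y^{ν/d} is irreducible in k[x₁,…,x_s,y₁,…,y_t], and for distinct d-th roots of unity ζ ≠ ζ' the corresponding factors are not associates of each other. In particular, this is the factorization of x^μ − y^ν into irreducibles, each irreducible factor occurring with multiplicity one. -/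
open MvPolynomial


lemma mv_prod_univ_X_pow {K : Type*} [CommSemiring K] {V : Type*} [Fintype V] [DecidableEq V]
    (γ : V →₀ ℕ) : (∏ v : V, (X v : MvPolynomial V K) ^ γ v) = monomial γ 1 := by
  rw [← prod_X_pow_eq_monomial]
  exact (Finset.prod_subset (Finset.subset_univ _) (fun x _ hx => by
    simp [Finsupp.notMem_support_iff.mp hx])).symm


lemma mv_prime_X {K : Type*} [Field K] {V : Type*} [DecidableEq V] (w : V) :
    Prime (X w : MvPolynomial V K) := by
  let ψ := (renameEquiv K ((Equiv.optionSubtypeNe w).symm)).trans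
    (optionEquivLeft K {v : V // v ≠ w})
  have h : ψ (X w) = Polynomial.X := by
    simp [ψ, renameEquiv_apply, rename_X, Equiv.optionSubtypeNe_symm_self, optionEquivLeft_X_none]
  have hp : Prime (ψ (X w)) := h ▸ Polynomial.prime_X
  exact (MulEquiv.prime_iff ψ).mp hp

lemma mv_multiplicity_X_monomial {K : Type*} [Field K] {V : Type*} [DecidableEq V]
    (w : V) (γ : V →₀ ℕ) {r : K} (hr : r ≠ 0) :
    multiplicity (X w) (monomial γ r : MvPolynomial V K) = γ w := by
  apply multiplicity_eq_of_dvd_of_not_dvd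
  · rw [X_pow_eq_monomial, monomial_dvd_monomial]
    exact ⟨Or.inr (Finsupp.single_le_iff.mpr le_rfl), one_dvd _⟩
  · rw [X_pow_eq_monomial, monomial_dvd_monomial]
    rintro ⟨h | h, -⟩
    · exact hr h
    · have := Finsupp.single_le_iff.mp h
      omega

section Aux
variable {k : Type*} [Field k] [IsAlgClosed k] [CharZero k]

set_option maxHeartbeats 1000000 in
lemma aux_irreducible {V : Type*} [Fintype V] [DecidableEq V]
    (α β : V →₀ ℕ) (c : k) (hc : c ≠ 0) (hdis : Disjoint α.support β.support)
    (v₀ : V) (hβ0 : β v₀ = 0) (hodd : Odd (α v₀))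
    (hg : ∀ p : ℕ, p.Prime → p ∣ α v₀ → ∃ v, ¬ (p : ℤ) ∣ ((α v : ℤ) - (β v : ℤ))) :
    Irreducible (monomial α 1 - monomial β c : MvPolynomial V k) := by
  classical
  set n := α v₀ with hn
  have hn0 : n ≠ 0 := by rintro h; rw [h] at hodd; simp at hodd
  let ψ : MvPolynomial V k ≃ₐ[k] Polynomial (MvPolynomial {v : V // v ≠ v₀} k) :=
    (renameEquiv k ((Equiv.optionSubtypeNe v₀).symm)).trans (optionEquivLeft k {v : V // v ≠ v₀})
  set α' : {v : V // v ≠ v₀} →₀ ℕ := α.subtypeDomain (· ≠ v₀) with hα'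
  set β' : {v : V // v ≠ v₀} →₀ ℕ := β.subtypeDomain (· ≠ v₀) with hβ'
  set A₁  : MvPolynomial {v : V // v ≠ v₀} k := monomial α' 1 with hA₁
  set c₂  : MvPolynomial {v : V // v ≠ v₀} k := monomial β' c with hc₂
  set P : Polynomial (MvPolynomial {v : V // v ≠ v₀} k) := Polynomial.C A₁ * Polynomial.X ^ n - Polynomial.C c₂ with hP
  -- computations of ψ.symm
  have hψX : ψ.symm Polynomial.X = X v₀ := by
    have h1 : (optionEquivLeft k {v : V // v ≠ v₀}).symm Polynomial.X = X none := by
      rw [← optionEquivLeft_X_none (R := k) (S₁ := {v : V // v ≠ v₀})]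
      exact AlgEquiv.symm_apply_apply _ _
    simp [ψ, renameEquiv_symm, renameEquiv_apply, h1, rename_X]
  have hψC : ∀ (γ : {v : V // v ≠ v₀} →₀ ℕ) (r : k),
      ψ.symm (Polynomial.C (monomial γ r)) = C r * ∏ w ∈ γ.support, X (w : V) ^ γ w := by
    intro γ r
    have h0 : (monomial γ r : MvPolynomial {v : V // v ≠ v₀} k) = C r * ∏ w ∈ γ.support, X w ^ γ w := by
      rw [prod_X_pow_eq_monomial, C_mul_monomial, mul_one]
    have h1 : (Polynomial.C ((∏ w ∈ γ.support, X w ^ γ w : MvPolynomial {v : V // v ≠ v₀} k)) : Polynomial (MvPolynomial {v : V // v ≠ v₀} k))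
        = ∏ w ∈ γ.support, Polynomial.C (X w) ^ γ w := by
      rw [map_prod]
      exact Finset.prod_congr rfl fun w _ => by rw [map_pow]
    rw [h0, map_mul, map_mul, h1, map_prod]
    congr 1
    · have h2 : (Polynomial.C (C r) : Polynomial (MvPolynomial {v : V // v ≠ v₀} k)) = algebraMap k _ r := rfl
      rw [h2, AlgEquiv.commutes]; rfl
    · refine Finset.prod_congr rfl fun w _ => ?_
      rw [map_pow]
      congr 1
      have h3 : ψ (X (w : V)) = Polynomial.C (X w) := by
        have h4 : ((Equiv.optionSubtypeNe v₀).symm (w : V)) = some w := by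
          rw [Equiv.optionSubtypeNe_symm_of_ne w.2]
        simp only [ψ, AlgEquiv.trans_apply, renameEquiv_apply, rename_X, h4]
        exact optionEquivLeft_X_some k {v : V // v ≠ v₀} w
      rw [← h3, AlgEquiv.symm_apply_apply]
  -- ψ of our polynomial
  have hψf : ψ (monomial α 1 - monomial β c) = P := by
    have key : (monomial α 1 - monomial β c : MvPolynomial V k) = ψ.symm P := by
      rw [hP, map_sub, map_mul, map_pow, hψX, hψC, hψC]
      have hsupβ : β.support.filter (fun v => v ≠ v₀) = β.support := by
        apply Finset.filter_true_of_mem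
        intro v hv
        rintro rfl
        exact (Finsupp.mem_support_iff.mp hv) hβ0
      have e2 : (C c * ∏ w ∈ β'.support, X (w : V) ^ β' w : MvPolynomial V k) = monomial β c := by
        rw [hβ', Finsupp.support_subtypeDomain]
        simp only [Finsupp.subtypeDomain_apply]
        rw [Finset.prod_subtype_of_mem (fun v => (X v : MvPolynomial V k) ^ β v)
          (fun x hx => by rintro rfl; exact (Finsupp.mem_support_iff.mp hx) hβ0)]
        rw [prod_X_pow_eq_monomial, C_mul_monomial, mul_one]
      have e1 : ((C 1 * ∏ w ∈ α'.support, X (w : V) ^ α' w) * X v₀ ^ n : MvPolynomial V k)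
          = monomial α 1 := by
        rw [hα', Finsupp.support_subtypeDomain]
        simp only [Finsupp.subtypeDomain_apply, map_one, one_mul]
        rw [Finset.prod_subtype_eq_prod_filter (fun v => (X v : MvPolynomial V k) ^ α v)]
        have hv₀mem : v₀ ∈ α.support := Finsupp.mem_support_iff.mpr hn0
        have e3 : (X v₀ ^ n : MvPolynomial V k)
            = ∏ v ∈ α.support.filter (fun v => ¬ v ≠ v₀), X v ^ α v := by
          have e4 : α.support.filter (fun v => ¬ v ≠ v₀) = {v₀} := by
            ext v
            simp only [Finset.mem_filter, Finset.mem_singleton, not_not]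
            constructor
            · rintro ⟨-, rfl⟩; rfl
            · rintro rfl; exact ⟨hv₀mem, rfl⟩
          rw [e4, Finset.prod_singleton, hn]
        rw [e3, Finset.prod_filter_mul_prod_filter_not, prod_X_pow_eq_monomial]
      rw [e1, e2]
    rw [key, AlgEquiv.apply_symm_apply]
  -- nonvanishing
  have hA₁0 : A₁ ≠ 0 := by rw [hA₁, Ne, monomial_eq_zero]; exact one_ne_zero
  have hc₂0 : c₂ ≠ 0 := by rw [hc₂, Ne, monomial_eq_zero]; exact hc
  have hdis' : Disjoint α'.support β'.support := by
    rw [Finset.disjoint_left]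
    intro w hw1 hw2
    rw [hα', Finsupp.support_subtypeDomain, Finset.mem_subtype] at hw1
    rw [hβ', Finsupp.support_subtypeDomain, Finset.mem_subtype] at hw2
    exact Finset.disjoint_left.mp hdis hw1 hw2
  -- no common prime factor of the two monomials
  have hX_nassoc : ∀ w₁ w₂ : {v : V // v ≠ v₀}, w₁ ∈ α'.support → w₂ ∈ β'.support →
      ¬ Associated (X w₁ : MvPolynomial {v : V // v ≠ v₀} k) (X w₂) := by
    intro w₁ w₂ h1 h2 hass
    have hne : w₁ ≠ w₂ := fun h => Finset.disjoint_left.mp hdis' h1 (h ▸ h2)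
    have hdvd : (X w₁ : MvPolynomial {v : V // v ≠ v₀} k) ∣ X w₂ := hass.dvd
    rw [X, X, monomial_dvd_monomial] at hdvd
    rcases hdvd with ⟨h | h, -⟩
    · exact one_ne_zero h
    · have := Finsupp.single_le_iff.mp h
      rw [Finsupp.single_apply, if_neg (Ne.symm hne)] at this
      omega
  -- primitivity
  have hprim : P.IsPrimitive := by
    intro r hr
    have hcoeff := (Polynomial.C_dvd_iff_dvd_coeff r P).mp hr
    have h1 : r ∣ A₁ := by
      have := hcoeff n
      simpa [hP, Polynomial.coeff_X_pow, Polynomial.coeff_C, hn0] using this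
    have h2 : r ∣ c₂ := by
      have := hcoeff 0
      simp only [hP, Polynomial.coeff_sub, Polynomial.coeff_C_mul, Polynomial.coeff_X_pow,
        if_neg (Ne.symm hn0), mul_zero, Polynomial.coeff_C, if_pos rfl, zero_sub,
        dvd_neg] at this
      exact this
    by_contra hru
    have hr0 : r ≠ 0 := fun h => hA₁0 (by simpa [h] using h1)
    obtain ⟨q, hqirr, hqr⟩ := WfDvdMonoid.exists_irreducible_factor hru hr0
    have hq : Prime q := UniqueFactorizationMonoid.irreducible_iff_prime.mp hqirr
    have hqA : q ∣ A₁ := hqr.trans h1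
    have hqc : q ∣ c₂ := hqr.trans h2
    -- q divides the first monomial : associated to some X w₁
    have hprodA : A₁ = ∏ w ∈ α'.support, X w ^ α' w := by
      rw [prod_X_pow_eq_monomial, hA₁]
    have hprodc : c₂ = C c * ∏ w ∈ β'.support, X w ^ β' w := by
      rw [prod_X_pow_eq_monomial, C_mul_monomial, mul_one, hc₂]
    rw [hprodA] at hqA
    obtain ⟨w₁, hw₁, hqw₁⟩ := hq.exists_mem_finset_dvd hqA
    have hq1 : q ∣ X w₁ := hq.dvd_of_dvd_pow hqw₁
    rw [hprodc] at hqc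
    rcases hq.dvd_mul.mp hqc with h | h
    · exact hq.not_unit (isUnit_of_dvd_unit h (hc.isUnit.map (C : k →+* MvPolynomial {v : V // v ≠ v₀} k)))
    · obtain ⟨w₂, hw₂, hqw₂⟩ := hq.exists_mem_finset_dvd h
      have hq2 : q ∣ X w₂ := hq.dvd_of_dvd_pow hqw₂
      have ha1 : Associated q (X w₁) := hqirr.associated_of_dvd (mv_prime_X w₁).irreducible hq1
      have ha2 : Associated q (X w₂) := hqirr.associated_of_dvd (mv_prime_X w₂).irreducible hq2
      exact hX_nassoc w₁ w₂ hw₁ hw₂ (ha1.symm.trans ha2)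
  -- the fraction field
  let F := FractionRing (MvPolynomial {v : V // v ≠ v₀} k)
  let i : MvPolynomial {v : V // v ≠ v₀} k →+* F := algebraMap _ F
  have hi : Function.Injective i := IsFractionRing.injective (MvPolynomial {v : V // v ≠ v₀} k) F
  have hiA : (i A₁) ≠ 0 := fun h => hA₁0 (hi (by simpa using h))
  have hic : (i c₂) ≠ 0 := fun h => hc₂0 (hi (by simpa using h))
  set e : F := i c₂ / i A₁ with he
  have he0 : e ≠ 0 := div_ne_zero hic hiA
  -- Kummer
  have hKum : Irreducible (Polynomial.X ^ n - Polynomial.C e : Polynomial F) := by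
    apply X_pow_sub_C_irreducible_of_odd hodd
    intro p hp hpn u hu
    obtain ⟨fn, gd, hgd, rfl⟩ := IsFractionRing.div_surjective (A := MvPolynomial {v : V // v ≠ v₀} k) u
    have hgd0 : gd ≠ 0 := nonZeroDivisors.ne_zero hgd
    have higd : i gd ≠ 0 := fun h => hgd0 (hi (by simpa using h))
    have hfn0 : fn ≠ 0 := by
      rintro rfl
      rw [map_zero, zero_div, zero_pow hp.ne_zero] at hu
      exact he0 hu.symm
    have hifn : i fn ≠ 0 := fun h => hfn0 (hi (by simpa using h))
    -- cross-multiplied equation in R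
    have heqF : i fn ^ p * i A₁ = i c₂ * i gd ^ p := by
      rw [he] at hu
      rw [div_pow, div_eq_div_iff (pow_ne_zero _ higd) hiA] at hu
      linear_combination hu
    have heq : fn ^ p * A₁ = c₂ * gd ^ p := by
      apply hi
      push_cast [map_mul, map_pow]
      exact heqF
    -- the witness variable
    obtain ⟨v, hv⟩ := hg p hp hpn
    have hvv : v ≠ v₀ := by
      rintro rfl
      exact hv (by rw [hβ0]; push_cast; simpa using Int.natCast_dvd_natCast.mpr hpn)
    set w : {v : V // v ≠ v₀} := ⟨v, hvv⟩ with hw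
    have hq : Prime (X w : MvPolynomial {v : V // v ≠ v₀} k) := mv_prime_X w
    have hMfn : FiniteMultiplicity (X w : MvPolynomial {v : V // v ≠ v₀} k) fn := FiniteMultiplicity.of_prime_left hq hfn0
    have hMgd : FiniteMultiplicity (X w : MvPolynomial {v : V // v ≠ v₀} k) gd := FiniteMultiplicity.of_prime_left hq hgd0
    have h1 : multiplicity (X w) (fn ^ p * A₁)
        = p * multiplicity (X w) fn + α' w := by
      rw [multiplicity_mul hq (FiniteMultiplicity.of_prime_left hq
          (mul_ne_zero (pow_ne_zero _ hfn0) hA₁0)),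
        hMfn.multiplicity_pow hq, hA₁, mv_multiplicity_X_monomial w α' one_ne_zero]
    have h2 : multiplicity (X w) (c₂ * gd ^ p)
        = β' w + p * multiplicity (X w) gd := by
      rw [multiplicity_mul hq (FiniteMultiplicity.of_prime_left hq
          (mul_ne_zero hc₂0 (pow_ne_zero _ hgd0))),
        hMgd.multiplicity_pow hq, hc₂, mv_multiplicity_X_monomial w β' hc]
    have hαw : α' w = α v := by rw [hα']; rfl
    have hβw : β' w = β v := by rw [hβ']; rfl
    have hkey : p * multiplicity (X w) fn + α v = β v + p * multiplicity (X w) gd := by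
      rw [← hαw, ← hβw, ← h1, ← h2, heq]
    apply hv
    refine ⟨(multiplicity (X w) gd : ℤ) - multiplicity (X w) fn, ?_⟩
    have hkeyZ : (p : ℤ) * multiplicity (X w) fn + α v
        = β v + p * multiplicity (X w) gd := by exact_mod_cast hkey
    linear_combination hkeyZ
  -- transfer via Gauss
  have hmap : Polynomial.map i P = Polynomial.C (i A₁) * (Polynomial.X ^ n - Polynomial.C e) := by
    have hmul : Polynomial.C (i A₁) * Polynomial.C e = Polynomial.C (i c₂) := by
      rw [← map_mul]
      congr 1
      rw [he, mul_div_cancel₀ _ hiA]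
    rw [hP, mul_sub, hmul]
    simp [Polynomial.map_sub, Polynomial.map_mul, Polynomial.map_pow]
  have hirrmap : Irreducible (P.map i) := by
    rw [hmap]
    have hu : IsUnit (Polynomial.C (i A₁)) := Polynomial.isUnit_C.mpr hiA.isUnit
    have hass : Associated (Polynomial.X ^ n - Polynomial.C e)
        (Polynomial.C (i A₁) * (Polynomial.X ^ n - Polynomial.C e)) :=
      ⟨hu.unit, by rw [IsUnit.unit_spec, mul_comm]⟩
    exact hass.irreducible hKum
  have hPirr : Irreducible P :=
    hprim.irreducible_of_irreducible_map_of_injective hi hirrmap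
  have := (MulEquiv.irreducible_iff ψ.toMulEquiv).mp (by
    show Irreducible (ψ.toMulEquiv (monomial α 1 - monomial β c))
    have : ψ.toMulEquiv (monomial α 1 - monomial β c) = P := hψf
    rw [this]
    exact hPirr)
  exact this
end Aux


-- product formula helper
lemma mv_pow_sub_pow {k : Type*} [Field k] [IsAlgClosed k] [CharZero k] {V : Type*}
    {d : ℕ} (hd : 0 < d) (x y : MvPolynomial V k) :
    x ^ d - y ^ d = ∏ ζ ∈ Polynomial.nthRootsFinset d (1 : k), (x - C ζ * y) := by
  haveI : NeZero ((d : k)) := ⟨Nat.cast_ne_zero.mpr hd.ne'⟩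
  obtain ⟨ζ₀, hζ₀⟩ := HasEnoughRootsOfUnity.exists_primitiveRoot k d
  have hprim : IsPrimitiveRoot (C ζ₀ : MvPolynomial V k) d :=
    hζ₀.map_of_injective (C_injective V k)
  rw [hprim.pow_sub_pow_eq_prod_sub_mul x y hd]
  refine (Finset.prod_nbij (fun z => (C z : MvPolynomial V k))
    (fun a ha => Polynomial.map_mem_nthRootsFinset_one ha _)
    (fun a _ b _ H => C_injective V k H) (fun a ha => ?_) (fun _ _ => rfl)).symm
  have := Set.surj_on_of_inj_on_of_ncard_le (s := (Polynomial.nthRootsFinset d (1 : k) : Finset k))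
    (t := (Polynomial.nthRootsFinset d (1 : MvPolynomial V k) : Finset (MvPolynomial V k)))
    (fun z _ => (C z : MvPolynomial V k))
    (fun z hz => Polynomial.map_mem_nthRootsFinset_one hz _)
    (fun a _ b _ H => C_injective V k H)
    (by simp [hζ₀.card_nthRootsFinset, hprim.card_nthRootsFinset])
  obtain ⟨z, hz, hz1⟩ := this _ ha
  exact ⟨z, hz, hz1.symm⟩

/-- Factorization of `x^μ − y^ν` into irreducibles over an algebraically closed field `k`
of characteristic zero: with `d = gcd(μ₁,…,μ_s,ν₁,…,ν_t)`, one has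
`x^μ − y^ν = ∏_{ζ^d = 1} (x^{μ/d} − ζ·y^{ν/d})`, each factor is irreducible, and factors
corresponding to distinct roots of unity are not associates (multiplicity one). -/
theorem stmt_0 {k : Type*} [Field k] [IsAlgClosed k] [CharZero k]
    (s t : ℕ) (hs : 1 ≤ s) (ht : 1 ≤ t)
    (μ : Fin s → ℕ) (ν : Fin t → ℕ)
    (hμ : ∀ i, 0 < μ i) (hν : ∀ j, 0 < ν j)
    (d : ℕ) (hd : d = (Finset.univ : Finset (Fin s ⊕ Fin t)).gcd (Sum.elim μ ν)) :
    (((∏ i : Fin s, X (Sum.inl i) ^ μ i) - ∏ j : Fin t, X (Sum.inr j) ^ ν j :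
        MvPolynomial (Fin s ⊕ Fin t) k)
      = ∏ ζ ∈ Polynomial.nthRootsFinset d (1 : k),
          ((∏ i : Fin s, X (Sum.inl i) ^ (μ i / d)) -
            C ζ * ∏ j : Fin t, X (Sum.inr j) ^ (ν j / d)))
    ∧ (∀ ζ ∈ Polynomial.nthRootsFinset d (1 : k),
        Irreducible
          ((∏ i : Fin s, X (Sum.inl i) ^ (μ i / d)) -
              C ζ * ∏ j : Fin t, X (Sum.inr j) ^ (ν j / d) :
            MvPolynomial (Fin s ⊕ Fin t) k))
    ∧ (∀ ζ ∈ Polynomial.nthRootsFinset d (1 : k), ∀ ζ' ∈ Polynomial.nthRootsFinset d (1 : k),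
        ζ ≠ ζ' →
        ¬ Associated
            ((∏ i : Fin s, X (Sum.inl i) ^ (μ i / d)) -
                C ζ * ∏ j : Fin t, X (Sum.inr j) ^ (ν j / d) :
              MvPolynomial (Fin s ⊕ Fin t) k)
            ((∏ i : Fin s, X (Sum.inl i) ^ (μ i / d)) -
              C ζ' * ∏ j : Fin t, X (Sum.inr j) ^ (ν j / d))) := by
  classical
  have i0 : Fin s := ⟨0, hs⟩
  have j0 : Fin t := ⟨0, ht⟩
  have hdvd : ∀ x : Fin s ⊕ Fin t, d ∣ Sum.elim μ ν x := by
    intro x; rw [hd]; exact Finset.gcd_dvd (Finset.mem_univ x)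
  have hd0 : 0 < d := by
    rcases Nat.eq_zero_or_pos d with h | h
    · exfalso
      have := hdvd (Sum.inl i0)
      rw [h] at this
      simp only [Sum.elim_inl, zero_dvd_iff] at this
      exact (hμ i0).ne' this
    · exact h
  set a : Fin s → ℕ := fun i => μ i / d with ha_def
  set b : Fin t → ℕ := fun j => ν j / d with hb_def
  have had : ∀ i, a i * d = μ i := fun i => Nat.div_mul_cancel (hdvd (Sum.inl i))
  have hbd : ∀ j, b j * d = ν j := fun j => Nat.div_mul_cancel (hdvd (Sum.inr j))
  have ha : ∀ i, 0 < a i := fun i =>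
    Nat.div_pos (Nat.le_of_dvd (hμ i) (hdvd (Sum.inl i))) hd0
  have hb : ∀ j, 0 < b j := fun j =>
    Nat.div_pos (Nat.le_of_dvd (hν j) (hdvd (Sum.inr j))) hd0
  have hwitness : ∀ p : ℕ, p.Prime → ∃ x : Fin s ⊕ Fin t, ¬ p ∣ Sum.elim a b x := by
    intro p hp
    by_contra h
    push_neg at h
    have hall : ∀ x, d * p ∣ Sum.elim μ ν x := by
      intro x
      have h1 := h x
      have he : Sum.elim a b x * d = Sum.elim μ ν x := by
        cases x with
        | inl i => exact had i
        | inr j => exact hbd j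
      obtain ⟨c', hc'⟩ := h1
      exact ⟨c', by rw [← he, hc']; ring⟩
    have hdp : d * p ∣ d := by
      conv_rhs => rw [hd]
      exact Finset.dvd_gcd (fun x _ => hall x)
    have h1 := Nat.le_of_dvd hd0 hdp
    nlinarith [hp.two_le]
  -- monomial representation
  set αF : (Fin s ⊕ Fin t) →₀ ℕ := Finsupp.equivFunOnFinite.symm (Sum.elim a (0 : Fin t → ℕ)) with hαF
  set βF : (Fin s ⊕ Fin t) →₀ ℕ := Finsupp.equivFunOnFinite.symm (Sum.elim (0 : Fin s → ℕ) b) with hβF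
  have hαv : ∀ x, αF x = Sum.elim a (0 : Fin t → ℕ) x := fun x => rfl
  have hβv : ∀ x, βF x = Sum.elim (0 : Fin s → ℕ) b x := fun x => rfl
  have hprodA : (∏ i : Fin s, X (Sum.inl i) ^ a i : MvPolynomial (Fin s ⊕ Fin t) k)
      = monomial αF 1 := by
    rw [← mv_prod_univ_X_pow αF, Fintype.prod_sum_type]
    simp [hαv]
  have hprodB : (∏ j : Fin t, X (Sum.inr j) ^ b j : MvPolynomial (Fin s ⊕ Fin t) k)
      = monomial βF 1 := by
    rw [← mv_prod_univ_X_pow βF, Fintype.prod_sum_type]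
    simp [hβv]
  have hfζ : ∀ ζ : k, ((∏ i : Fin s, X (Sum.inl i) ^ a i)
      - C ζ * ∏ j : Fin t, X (Sum.inr j) ^ b j : MvPolynomial (Fin s ⊕ Fin t) k)
      = monomial αF 1 - monomial βF ζ := by
    intro ζ
    rw [hprodA, hprodB, C_mul_monomial, mul_one]
  have hdisj : Disjoint αF.support βF.support := by
    rw [Finset.disjoint_left]
    intro x hx1 hx2
    rw [Finsupp.mem_support_iff] at hx1 hx2
    cases x with
    | inl i => exact hx2 (hβv (Sum.inl i))
    | inr j => exact hx1 (hαv (Sum.inr j))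
  have hgg : ∀ p : ℕ, p.Prime → ∃ v, ¬ (p : ℤ) ∣ ((αF v : ℤ) - (βF v : ℤ)) := by
    intro p hp
    obtain ⟨x, hx⟩ := hwitness p hp
    refine ⟨x, fun hdd => hx ?_⟩
    cases x with
    | inl i =>
      rw [hαv, hβv] at hdd
      simp only [Sum.elim_inl, Finsupp.coe_zero, Pi.zero_apply,
        Nat.cast_zero, sub_zero] at hdd
      exact_mod_cast hdd
    | inr j =>
      rw [hαv, hβv] at hdd
      simp only [Sum.elim_inr, Finsupp.coe_zero, Pi.zero_apply,
        Nat.cast_zero, zero_sub, dvd_neg] at hdd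
      exact_mod_cast hdd
  refine ⟨?_, ?_, ?_⟩
  · -- part 1
    have key := mv_pow_sub_pow (k := k) (V := Fin s ⊕ Fin t) hd0
      (∏ i : Fin s, X (Sum.inl i) ^ a i) (∏ j : Fin t, X (Sum.inr j) ^ b j)
    have hA : ((∏ i : Fin s, X (Sum.inl i) ^ a i : MvPolynomial (Fin s ⊕ Fin t) k)) ^ d
        = ∏ i : Fin s, X (Sum.inl i) ^ μ i := by
      rw [← Finset.prod_pow]
      exact Finset.prod_congr rfl fun i _ => by rw [← pow_mul, had i]
    have hB : ((∏ j : Fin t, X (Sum.inr j) ^ b j : MvPolynomial (Fin s ⊕ Fin t) k)) ^ d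
        = ∏ j : Fin t, X (Sum.inr j) ^ ν j := by
      rw [← Finset.prod_pow]
      exact Finset.prod_congr rfl fun j _ => by rw [← pow_mul, hbd j]
    rw [hA, hB] at key
    exact key
  · -- part 2
    intro ζ hζmem
    have hζd : ζ ^ d = 1 := (Polynomial.mem_nthRootsFinset hd0 1).mp hζmem
    have hζ0 : ζ ≠ 0 := fun h => by
      rw [h, zero_pow hd0.ne'] at hζd
      exact zero_ne_one hζd
    rw [show ((∏ i : Fin s, X (Sum.inl i) ^ (μ i / d)) -
        C ζ * ∏ j : Fin t, X (Sum.inr j) ^ (ν j / d) : MvPolynomial (Fin s ⊕ Fin t) k)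
        = monomial αF 1 - monomial βF ζ from hfζ ζ]
    obtain ⟨x0, hx0⟩ := hwitness 2 Nat.prime_two
    cases x0 with
    | inl i₀ =>
      refine aux_irreducible αF βF ζ hζ0 hdisj (Sum.inl i₀) (hβv (Sum.inl i₀)) ?_
        (fun p hp _ => hgg p hp)
      have hodd : Odd (a i₀) := Nat.not_even_iff_odd.mp (fun he => hx0 he.two_dvd)
      rw [hαv]
      simpa using hodd
    | inr j₀ =>
      have hirr2 : Irreducible (monomial βF 1 - monomial αF ζ⁻¹ :
          MvPolynomial (Fin s ⊕ Fin t) k) := by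
        refine aux_irreducible βF αF ζ⁻¹ (inv_ne_zero hζ0) hdisj.symm (Sum.inr j₀)
          (hαv (Sum.inr j₀)) ?_ (fun p hp _ => ?_)
        · have hodd : Odd (b j₀) := Nat.not_even_iff_odd.mp (fun he => hx0 he.two_dvd)
          rw [hβv]
          simpa using hodd
        · obtain ⟨v, hv⟩ := hgg p hp
          exact ⟨v, fun hdd => hv (by rwa [← dvd_neg, neg_sub] at hdd)⟩
      have hu : IsUnit (-(C ζ) : MvPolynomial (Fin s ⊕ Fin t) k) :=
        (hζ0.isUnit.map (C : k →+* MvPolynomial (Fin s ⊕ Fin t) k)).neg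
      have hass : Associated (monomial βF 1 - monomial αF ζ⁻¹ :
          MvPolynomial (Fin s ⊕ Fin t) k) (monomial αF 1 - monomial βF ζ) := by
        refine ⟨hu.unit, ?_⟩
        rw [IsUnit.unit_spec]
        have h1 : (monomial βF 1 : MvPolynomial (Fin s ⊕ Fin t) k) * C ζ = monomial βF ζ := by
          rw [mul_comm, C_mul_monomial, mul_one]
        have h2 : (monomial αF ζ⁻¹ : MvPolynomial (Fin s ⊕ Fin t) k) * C ζ = monomial αF 1 := by
          rw [mul_comm, C_mul_monomial, mul_inv_cancel₀ hζ0]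
        calc (monomial βF 1 - monomial αF ζ⁻¹ : MvPolynomial (Fin s ⊕ Fin t) k) * (-(C ζ))
            = monomial αF ζ⁻¹ * C ζ - monomial βF 1 * C ζ := by ring
          _ = monomial αF 1 - monomial βF ζ := by rw [h1, h2]
      exact hass.irreducible hirr2
  · -- part 3
    intro ζ hζm ζ' hζm' hne hass
    set φ : MvPolynomial (Fin s ⊕ Fin t) k →ₐ[k] Polynomial k :=
      aeval (Sum.elim (fun _ => Polynomial.X) (fun _ => (1 : Polynomial k))) with hφ
    set A : ℕ := ∑ i : Fin s, (μ i / d) with hA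
    have hφf : ∀ ξ : k, φ ((∏ i : Fin s, X (Sum.inl i) ^ (μ i / d)) -
        C ξ * ∏ j : Fin t, X (Sum.inr j) ^ (ν j / d))
        = Polynomial.X ^ A - Polynomial.C ξ := by
      intro ξ
      rw [map_sub, map_mul, map_prod, map_prod]
      have e1 : ∀ i : Fin s, φ (X (Sum.inl i) ^ (μ i / d)) = Polynomial.X ^ (μ i / d) := by
        intro i; rw [map_pow]; simp [hφ, aeval_X]
      have e2 : ∀ j : Fin t, φ (X (Sum.inr j) ^ (ν j / d)) = 1 := by
        intro j; rw [map_pow]; simp [hφ, aeval_X]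
      rw [Finset.prod_congr rfl (fun i _ => e1 i), Finset.prod_congr rfl (fun j _ => e2 j)]
      rw [Finset.prod_const_one, mul_one, Finset.prod_pow_eq_pow_sum]
      congr 1
      simp [hφ, aeval_C, Polynomial.algebraMap_eq]
    have hassφ : Associated (Polynomial.X ^ A - Polynomial.C ζ)
        (Polynomial.X ^ A - Polynomial.C ζ') := by
      have := hass.map φ
      rwa [hφf ζ, hφf ζ'] at this
    have hA0 : A ≠ 0 := by
      have : 0 < A := by
        rw [hA]
        refine Finset.sum_pos (fun i _ => ?_) ⟨i0, Finset.mem_univ i0⟩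
        exact ha i
      omega
    have heq := Polynomial.eq_of_monic_of_associated
      (Polynomial.monic_X_pow_sub_C ζ hA0) (Polynomial.monic_X_pow_sub_C ζ' hA0) hassφ
    have hCC : (Polynomial.C ζ : Polynomial k) = Polynomial.C ζ' := sub_right_inj.mp heq
    exact hne (Polynomial.C_injective hCC)
end

section
/- Let k be an algebraically closed field of characteristic zero, let s, t ≥ 1, and let μ = (μ₁,…,μ_s) and ν = (ν₁,…,ν_t) be tuples of positive integers with gcd(μ₁,…,μ_s,ν₁,…,ν_t) = 1. Then for every nonzero scalar λ ∈ k, the polynomial x^μ − λ·y^ν is irreducible in the polynomial ring k[x₁,…,x_s,y₁,…,y_t]. -/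
open MvPolynomial

namespace Stmt1Aux

/-- Bezout representation for a `Finset.gcd` of natural numbers, with integer coefficients. -/
lemma finset_gcd_bezout {ι : Type*} [DecidableEq ι] (w : ι → ℕ) (s : Finset ι) :
    ∃ c : ι → ℤ, ∑ i ∈ s, c i * (w i : ℤ) = ((s.gcd w : ℕ) : ℤ) := by
  classical
  induction s using Finset.induction_on with
  | empty => exact ⟨0, by simp⟩
  | insert a s' ha ih =>
    obtain ⟨c, hc⟩ := ih
    set A := Int.gcdA ((w a : ℕ) : ℤ) ((s'.gcd w : ℕ) : ℤ) with hA
    set B := Int.gcdB ((w a : ℕ) : ℤ) ((s'.gcd w : ℕ) : ℤ) with hB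
    refine ⟨fun i => if i = a then A else B * c i, ?_⟩
    simp only [Finset.sum_insert ha, Finset.gcd_insert]
    have h1 : ∑ i ∈ s', (if i = a then A else B * c i) * (w i : ℤ)
        = B * ∑ i ∈ s', c i * (w i : ℤ) := by
      rw [Finset.mul_sum]
      refine Finset.sum_congr rfl fun i hi => ?_
      have : i ≠ a := fun h => ha (h ▸ hi)
      simp only [if_neg this]; ring
    have h3 : GCDMonoid.gcd (w a) (s'.gcd w) = Nat.gcd (w a) (s'.gcd w) := rfl
    have h2 : ((Nat.gcd (w a) (s'.gcd w) : ℕ) : ℤ)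
        = ((w a : ℕ) : ℤ) * A + ((s'.gcd w : ℕ) : ℤ) * B := by
      rw [hA, hB, ← Int.gcd_natCast_natCast (w a) (s'.gcd w)]
      exact Int.gcd_eq_gcd_ab _ _
    rw [h1, hc, h3, h2]
    simp only [if_true]
    ring

lemma prod_monomial_one {R : Type*} [CommSemiring R] {σ ι : Type*} (s : Finset ι)
    (d : ι → (σ →₀ ℕ)) :
    ∏ i ∈ s, (monomial (d i) (1 : R)) = monomial (∑ i ∈ s, d i) 1 := by
  classical
  induction s using Finset.induction_on with
  | empty => simp [monomial_zero', C_1]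
  | insert a s' ha ih =>
    rw [Finset.prod_insert ha, Finset.sum_insert ha, ih, monomial_mul, one_mul]

/-- Helper: in a commutative group, a product of integer powers is the power of the sum. -/
lemma prod_zpow_sum {G : Type*} [CommGroup G] {ι : Type*} (u : G) (s : Finset ι) (m : ι → ℤ) :
    ∏ i ∈ s, u ^ m i = u ^ (∑ i ∈ s, m i) := by
  classical
  induction s using Finset.induction_on with
  | empty => simp
  | insert a s' ha ih =>
    rw [Finset.prod_insert ha, Finset.sum_insert ha, ih, zpow_add]

/-- The main auxiliary result: given the combinatorial data, the binomial
`x^dμ - lam * x^dν` is prime. -/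
theorem prime_binomial {k : Type*} [Field k] {σ : Type*} [Fintype σ] [DecidableEq σ]
    (lam : k) (hlam : lam ≠ 0) (c vz : σ → ℤ) (hc : ∑ i, c i * vz i = 1)
    (dμ dν : σ →₀ ℕ) (hv : ∀ i, (dμ i : ℤ) - (dν i : ℤ) = vz i)
    (hdisj : ∀ i, dμ i = 0 ∨ dν i = 0) :
    Prime ((monomial dμ (1 : k)) - C lam * monomial dν 1) := by
  classical
  set f : MvPolynomial σ k := (monomial dμ (1 : k)) - C lam * monomial dν 1 with hf
  -- integer powers of lam
  set L : ℤ → k := fun m => lam ^ m with hL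
  have hLne : ∀ m, L m ≠ 0 := fun m => zpow_ne_zero m hlam
  have hLadd : ∀ m n, L (m + n) = L m * L n := fun m n => zpow_add₀ hlam m n
  have hLnat : ∀ n : ℕ, L (n : ℤ) = lam ^ n := fun n => zpow_natCast lam n
  have hLone : L 1 = lam := by simpa using hLnat 1
  have hLzero : L 0 = 1 := by simpa using hLnat 0
  have hLpow : ∀ (m : ℤ) (n : ℕ), L m ^ n = L (m * n) := by
    intro m n
    induction n with
    | zero => simp [hLzero]
    | succ n ihn =>
      rw [pow_succ, ihn, ← hLadd]
      congr 1; push_cast; ring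
  -- the dot product and exponent map
  set dot : (σ →₀ ℕ) → ℤ := fun a => ∑ i, c i * (a i : ℤ) with hdot
  set E : (σ →₀ ℕ) → (σ → ℤ) := fun a j => (a j : ℤ) - dot a * vz j with hE
  have hdot_single : ∀ i : σ, dot (Finsupp.single i 1) = c i := by
    intro i
    show ∑ l : σ, c l * ((Finsupp.single i 1 : σ →₀ ℕ) l : ℤ) = c i
    rw [Finset.sum_eq_single i]
    · simp
    · intro b _ hb
      simp [Finsupp.single_apply, Ne.symm hb]
    · intro h; exact absurd (Finset.mem_univ i) h
  -- the twisted algebra map into the Laurent ring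
  set A := AddMonoidAlgebra k (σ → ℤ) with hA
  set φ : MvPolynomial σ k →ₐ[k] A :=
    aeval (fun i => AddMonoidAlgebra.single (E (Finsupp.single i 1)) (L (c i))) with hφ
  have hE_sum : ∀ a : σ →₀ ℕ, (∑ i : σ, (a i) • E (Finsupp.single i 1)) = E a := by
    intro a
    funext j
    rw [Finset.sum_apply]
    have hterm : ∀ i : σ, ((a i) • E (Finsupp.single i 1)) j
        = (a i : ℤ) * ((if i = j then (1:ℤ) else 0) - c i * vz j) := by
      intro i
      have h4 : E (Finsupp.single i 1) j = (if i = j then (1:ℤ) else 0) - c i * vz j := by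
        simp only [hE, hdot_single]
        congr 1
        rw [Finsupp.single_apply]
        split <;> simp
      rw [Pi.smul_apply, h4, nsmul_eq_mul]
    rw [Finset.sum_congr rfl fun i _ => hterm i]
    have h1 : ∑ i : σ, (a i : ℤ) * ((if i = j then (1:ℤ) else 0) - c i * vz j)
        = (∑ i : σ, (a i : ℤ) * (if i = j then (1:ℤ) else 0))
          - (∑ i : σ, (a i : ℤ) * c i) * vz j := by
      rw [Finset.sum_mul, ← Finset.sum_sub_distrib]
      refine Finset.sum_congr rfl fun i _ => by ring
    rw [h1]
    have h2 : ∑ i : σ, (a i : ℤ) * (if i = j then (1:ℤ) else 0) = (a j : ℤ) := by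
      rw [Finset.sum_eq_single j]
      · simp
      · intro b _ hb; simp [hb]
      · intro h; exact absurd (Finset.mem_univ j) h
    rw [h2]
    have h3 : ∑ i : σ, (a i : ℤ) * c i = dot a := by
      rw [hdot]; exact Finset.sum_congr rfl fun i _ => by ring
    rw [h3]
  have hφmon : ∀ (a : σ →₀ ℕ) (κ : k),
      φ (monomial a κ) = AddMonoidAlgebra.single (E a) (κ * L (dot a)) := by
    intro a κ
    rw [hφ, aeval_monomial]
    have hpow : ∀ (i : σ) (n : ℕ),
        (AddMonoidAlgebra.single (E (Finsupp.single i 1)) (L (c i)) : A) ^ n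
          = AddMonoidAlgebra.single (n • E (Finsupp.single i 1)) (L (c i * n)) := by
      intro i n
      rw [AddMonoidAlgebra.single_pow, hLpow]
    have hprod : (a.prod fun i n =>
          (AddMonoidAlgebra.single (E (Finsupp.single i 1)) (L (c i)) : A) ^ n)
        = AddMonoidAlgebra.single (E a) (L (dot a)) := by
      rw [Finsupp.prod_fintype]
      · rw [Finset.prod_congr rfl fun i _ => hpow i (a i)]
        rw [AddMonoidAlgebra.prod_single]
        congr 1
        · exact hE_sum a
        · have hLu : ∀ m : ℤ, L m = ((Units.mk0 lam hlam ^ m : kˣ) : k) := by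
            intro m
            simp only [hL]
            rw [Units.val_zpow_eq_zpow_val, Units.val_mk0]
          rw [Finset.prod_congr rfl fun i _ => hLu (c i * ((a i : ℕ) : ℤ))]
          have hcoe : ∀ (s : Finset σ) (g : σ → kˣ),
              (∏ i ∈ s, ((g i : kˣ) : k)) = (((∏ i ∈ s, g i : kˣ)) : k) := by
            intro s g; exact (map_prod (Units.coeHom k) g s).symm
          rw [hcoe, prod_zpow_sum, ← hLu]
      · intro i; exact pow_zero _
    rw [hprod]
    have halg : (algebraMap k A) κ = AddMonoidAlgebra.single 0 κ := rfl
    rw [halg, AddMonoidAlgebra.single_mul_single, zero_add]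
  -- basic facts about f
  have hfmon : (C lam * monomial dν 1 : MvPolynomial σ k) = monomial dν lam := by
    rw [C_mul_monomial, mul_one]
  have hdots : dot dμ = dot dν + 1 := by
    have : dot dμ - dot dν = 1 := by
      rw [hdot, ← Finset.sum_sub_distrib]
      rw [← hc]
      refine Finset.sum_congr rfl fun i _ => ?_
      rw [← hv i]; ring
    omega
  have hEμν : E dμ = E dν := by
    funext j
    simp only [hE, hdots]
    rw [← hv j]; ring
  have hφf : φ f = 0 := by
    rw [hf, map_sub, hfmon, hφmon, hφmon, hEμν, hdots, hLadd, hLone, one_mul,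
      mul_comm (L (dot dν)) lam, sub_self]
  -- membership lemma, natural power version
  have hmemA : ∀ (e : σ →₀ ℕ) (m : ℕ),
      (monomial (e + m • dμ) (1:k)) - C (lam ^ m) * monomial (e + m • dν) 1
        ∈ Ideal.span {f} := by
    intro e m
    rw [Ideal.mem_span_singleton]
    have key : (monomial (e + m • dμ) (1:k)) - C (lam ^ m) * monomial (e + m • dν) 1
        = monomial e 1 * ((monomial dμ (1:k)) ^ m - (C lam * monomial dν 1) ^ m) := by
      simp only [mul_pow, monomial_pow, one_pow, ← C_pow, C_mul_monomial, mul_sub,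
        monomial_mul, mul_one, one_mul]
    rw [key]
    exact Dvd.dvd.mul_left (sub_dvd_pow_sub_pow _ _ m) _
  -- membership lemma from coordinatewise condition, natural m
  have hmemB : ∀ (a b : σ →₀ ℕ) (m : ℕ), (∀ i, (a i : ℤ) - (b i : ℤ) = m * vz i) →
      (monomial a (1:k)) - C (lam ^ m) * monomial b 1 ∈ Ideal.span {f} := by
    intro a b m hab
    set e : σ →₀ ℕ := Finsupp.equivFunOnFinite.symm (fun i => if dν i = 0 then b i else a i)
      with he
    have heapp : ∀ i, e i = if dν i = 0 then b i else a i := fun i => rfl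
    have ha : a = e + m • dμ := by
      ext i
      have h := hab i
      rw [← hv i] at h
      simp only [Finsupp.add_apply, Finsupp.smul_apply, smul_eq_mul, heapp]
      rcases hdisj i with h0 | h0
      · rw [h0, mul_zero, add_zero]
        by_cases h1 : dν i = 0
        · rw [if_pos h1]
          rw [h0, h1] at h
          push_cast at h
          omega
        · rw [if_neg h1]
      · rw [if_pos h0]
        have hq : (a i : ℤ) = (b i : ℤ) + (m : ℤ) * (dμ i : ℤ) := by
          rw [h0] at h
          push_cast at h
          linear_combination h
        exact_mod_cast hq
    have hb : b = e + m • dν := by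
      ext i
      have h := hab i
      rw [← hv i] at h
      simp only [Finsupp.add_apply, Finsupp.smul_apply, smul_eq_mul, heapp]
      by_cases h1 : dν i = 0
      · rw [if_pos h1, h1, mul_zero, add_zero]
      · rw [if_neg h1]
        have h0 : dμ i = 0 := (hdisj i).resolve_right h1
        have hq : (b i : ℤ) = (a i : ℤ) + (m : ℤ) * (dν i : ℤ) := by
          rw [h0] at h
          push_cast at h
          linear_combination -h
        exact_mod_cast hq
    rw [ha, hb]
    exact hmemA e m
  -- membership lemma, integer version
  have hmemC : ∀ (a b : σ →₀ ℕ) (m : ℤ), (∀ i, (a i : ℤ) - (b i : ℤ) = m * vz i) →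
      (monomial a (1:k)) - C (L m) * monomial b 1 ∈ Ideal.span {f} := by
    intro a b m hab
    rcases le_or_gt 0 m with hm | hm
    · obtain ⟨n, rfl⟩ := Int.eq_ofNat_of_zero_le hm
      rw [hLnat]
      exact hmemB a b n (by exact_mod_cast hab)
    · obtain ⟨n, hn⟩ : ∃ n : ℕ, m = -(n : ℤ) := ⟨m.natAbs, by omega⟩
      have hba : ∀ i, (b i : ℤ) - (a i : ℤ) = (n : ℤ) * vz i := by
        intro i; have := hab i; rw [hn] at this; linarith [this]
      have hmem := hmemB b a n hba
      have key : (monomial a (1:k)) - C (L m) * monomial b 1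
          = (- C (L m)) * ((monomial b (1:k)) - C (lam ^ n) * monomial a 1) := by
        have hLL : L m * lam ^ n = 1 := by
          rw [← hLnat n, ← hLadd, hn, neg_add_cancel, hLzero]
        rw [neg_mul, mul_sub, neg_sub, ← mul_assoc, ← C_mul, hLL, C_1, one_mul]
      rw [key]
      exact Ideal.mul_mem_left _ _ hmem
  -- the kernel inclusion
  have hker : ∀ (n : ℕ) (g : MvPolynomial σ k), g.support.card ≤ n → φ g = 0 →
      g ∈ Ideal.span {f} := by
    intro n
    induction n with
    | zero =>
      intro g hg _
      have : g.support = ∅ := Finset.card_eq_zero.mp (Nat.le_zero.mp hg)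
      have : g = 0 := by rwa [MvPolynomial.support_eq_empty] at this
      simp [this]
    | succ n ih =>
      intro g hcard hg0
      by_cases hgz : g = 0
      · simp [hgz]
      obtain ⟨a, ha⟩ := (MvPolynomial.support_nonempty.mpr hgz)
      have hcoeffa : coeff a g ≠ 0 := MvPolynomial.mem_support_iff.mp ha
      have hrepr : φ g = ∑ b ∈ g.support,
          AddMonoidAlgebra.single (E b) (coeff b g * L (dot b)) := by
        conv_lhs => rw [← support_sum_monomial_coeff g]
        rw [map_sum]
        exact Finset.sum_congr rfl fun b _ => hφmon b (coeff b g)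
      have heval : (∑ b ∈ g.support,
          (AddMonoidAlgebra.single (E b) (coeff b g * L (dot b)) : A)).coeff (E a)
            = 0 := by
        have : (φ g).coeff (E a) = 0 := by rw [hg0]; rfl
        rw [hrepr] at this
        exact this
      have hex : ∃ b ∈ g.support, b ≠ a ∧ E b = E a := by
        by_contra hno
        push_neg at hno
        rw [AddMonoidAlgebra.coeff_sum, Finset.sum_apply'] at heval
        rw [Finset.sum_eq_single a] at heval
        · rw [AddMonoidAlgebra.coeff_single, Finsupp.single_apply, if_pos rfl] at heval
          exact (mul_ne_zero hcoeffa (hLne _)) heval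
        · intro b hb hba
          have : E b ≠ E a := hno b hb hba
          rw [AddMonoidAlgebra.coeff_single, Finsupp.single_apply, if_neg this]
        · intro h; exact absurd ha h
      obtain ⟨b, hbsupp, hba, hEba⟩ := hex
      set m : ℤ := dot a - dot b with hm
      have harel : ∀ i, (a i : ℤ) - (b i : ℤ) = m * vz i := by
        intro i
        have := congrFun hEba i
        simp only [hE] at this
        rw [hm]; linarith
      have hmem0 := hmemC a b m harel
      set h : MvPolynomial σ k :=
        C (coeff a g) * ((monomial a (1:k)) - C (L m) * monomial b 1) with hh
      have hhmem : h ∈ Ideal.span {f} := Ideal.mul_mem_left _ _ hmem0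
      have hhsimp : h = monomial a (coeff a g) - monomial b (coeff a g * L m) := by
        rw [hh, mul_sub, C_mul_monomial, mul_one, ← mul_assoc, ← C_mul, C_mul_monomial, mul_one]
      have hφh : φ h = 0 := by
        rw [hhsimp, map_sub, hφmon, hφmon, hEba]
        have : coeff a g * L m * L (dot b) = coeff a g * L (dot a) := by
          rw [mul_assoc, ← hLadd, hm, sub_add_cancel]
        rw [this, sub_self]
      set g' : MvPolynomial σ k := g - h with hg'
      have hφg' : φ g' = 0 := by rw [hg', map_sub, hg0, hφh, sub_zero]
      have hsupp' : g'.support ⊆ g.support.erase a := by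
        intro x hx
        have hxne : coeff x g' ≠ 0 := MvPolynomial.mem_support_iff.mp hx
        rw [Finset.mem_erase]
        constructor
        · rintro rfl
          apply hxne
          rw [hg', hhsimp]
          simp only [coeff_sub, coeff_monomial]
          rw [if_neg hba]
          simp
        · by_contra hxg
          apply hxne
          have hxb : x ≠ b := by rintro rfl; exact hxg hbsupp
          have hxa : x ≠ a := by
            rintro rfl; exact hxg ha
          rw [hg', hhsimp]
          simp only [coeff_sub, coeff_monomial]
          rw [if_neg (fun hax => hxa hax.symm), if_neg (fun hbx => hxb hbx.symm)]
          have : coeff x g = 0 := by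
            by_contra hc'; exact hxg (MvPolynomial.mem_support_iff.mpr hc')
          rw [this]; ring
      have hcard' : g'.support.card ≤ n := by
        have h1 : (g.support.erase a).card < g.support.card :=
          Finset.card_erase_lt_of_mem ha
        have h2 : g'.support.card ≤ (g.support.erase a).card :=
          Finset.card_le_card hsupp'
        omega
      have hg'mem := ih g' hcard' hφg'
      have : g = g' + h := by rw [hg']; ring
      rw [this]
      exact Ideal.add_mem _ hg'mem hhmem
  -- span {f} is prime
  have hf0 : f ≠ 0 := by
    intro h0
    have : coeff dμ f = 0 := by rw [h0]; simp
    rw [hf, hfmon, coeff_sub, coeff_monomial, coeff_monomial, if_pos rfl] at this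
    have hne : dμ ≠ dν := by
      intro heq
      have hvz0 : ∀ i, vz i = 0 := by intro i; rw [← hv i, heq]; ring
      rw [Finset.sum_congr rfl (fun i _ => by rw [hvz0 i, mul_zero])] at hc
      simp at hc
    rw [if_neg (fun h' => hne h'.symm)] at this
    simp at this
  have hprime : (Ideal.span {f}).IsPrime := by
    constructor
    · intro htop
      have h1 : (1 : MvPolynomial σ k) ∈ Ideal.span {f} := by rw [htop]; trivial
      have hdvd : f ∣ 1 := Ideal.mem_span_singleton.mp h1
      obtain ⟨q, hq⟩ := hdvd
      have : (1 : A) = 0 := by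
        have := congrArg φ hq
        rw [map_one, map_mul, hφf, zero_mul] at this
        exact this
      exact one_ne_zero this
    · intro x y hxy
      have hfd : f ∣ x * y := Ideal.mem_span_singleton.mp hxy
      obtain ⟨q, hq⟩ := hfd
      have hφxy : φ x * φ y = 0 := by
        rw [← map_mul, hq, map_mul, hφf, zero_mul]
      rcases mul_eq_zero.mp hφxy with h | h
      · exact Or.inl (hker x.support.card x le_rfl h)
      · exact Or.inr (hker y.support.card y le_rfl h)
  exact (Ideal.span_singleton_prime hf0).mp hprime

end Stmt1Aux

/-- Let `k` be an algebraically closed field of characteristic zero, `s, t ≥ 1`, and let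
`μ`, `ν` be tuples of positive integers with `gcd(μ₁,…,μ_s,ν₁,…,ν_t) = 1`. Then for every
nonzero `λ ∈ k`, the polynomial `x^μ − λ·y^ν` is irreducible in `k[x₁,…,x_s,y₁,…,y_t]`. -/
theorem stmt_1 {k : Type*} [Field k] [IsAlgClosed k] [CharZero k]
    (s t : ℕ) (hs : 1 ≤ s) (ht : 1 ≤ t)
    (μ : Fin s → ℕ) (ν : Fin t → ℕ)
    (hμ : ∀ i, 0 < μ i) (hν : ∀ j, 0 < ν j)
    (hgcd : (Finset.univ : Finset (Fin s ⊕ Fin t)).gcd (Sum.elim μ ν) = 1)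
    (lam : k) (hlam : lam ≠ 0) :
    Irreducible
      ((∏ i : Fin s, X (Sum.inl i) ^ μ i) -
          C lam * ∏ j : Fin t, X (Sum.inr j) ^ ν j :
        MvPolynomial (Fin s ⊕ Fin t) k) := by
  classical
  set σ := Fin s ⊕ Fin t
  -- Bezout coefficients
  obtain ⟨c₀, hc₀⟩ := Stmt1Aux.finset_gcd_bezout (Sum.elim μ ν) (Finset.univ : Finset σ)
  rw [hgcd] at hc₀
  set vz : σ → ℤ := Sum.elim (fun i => (μ i : ℤ)) (fun j => -(ν j : ℤ)) with hvz
  set c : σ → ℤ := Sum.elim (fun i => c₀ (Sum.inl i)) (fun j => -(c₀ (Sum.inr j))) with hcdef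
  have hc : ∑ i, c i * vz i = 1 := by
    have h1 : ∀ x : σ, c x * vz x = c₀ x * ((Sum.elim μ ν x : ℕ) : ℤ) := by
      intro x
      rcases x with i | j <;> simp [hcdef, hvz] <;> ring
    rw [Finset.sum_congr rfl fun x _ => h1 x]
    rw [hc₀]
    norm_num
  set dμ : σ →₀ ℕ := Finsupp.equivFunOnFinite.symm (Sum.elim μ (fun _ => 0)) with hdμ
  set dν : σ →₀ ℕ := Finsupp.equivFunOnFinite.symm (Sum.elim (fun _ => 0) ν) with hdν
  have hdμapp : ∀ x, dμ x = Sum.elim μ (fun _ => 0) x := fun x => rfl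
  have hdνapp : ∀ x, dν x = Sum.elim (fun _ => 0) ν x := fun x => rfl
  have hv : ∀ i : σ, (dμ i : ℤ) - (dν i : ℤ) = vz i := by
    intro i
    rcases i with i | j <;> simp [hdμapp, hdνapp, hvz]
  have hdisj : ∀ i : σ, dμ i = 0 ∨ dν i = 0 := by
    intro i
    rcases i with i | j
    · right; simp [hdνapp]
    · left; simp [hdμapp]
  have hprime := Stmt1Aux.prime_binomial lam hlam c vz hc dμ dν hv hdisj
  have hμprod : (∏ i : Fin s, X (Sum.inl i) ^ μ i : MvPolynomial σ k)
      = monomial dμ 1 := by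
    have h1 : ∀ i : Fin s, (X (Sum.inl i) ^ μ i : MvPolynomial σ k)
        = monomial (Finsupp.single (Sum.inl i) (μ i)) 1 := fun i =>
      MvPolynomial.X_pow_eq_monomial
    have hd : (∑ i : Fin s, Finsupp.single (Sum.inl i : σ) (μ i)) = dμ := by
      ext x
      rw [Finsupp.finset_sum_apply]
      rcases x with i | j
      · rw [Finset.sum_eq_single i]
        · simp [hdμapp]
        · intro b _ hb
          rw [Finsupp.single_apply, if_neg (by simpa using hb)]
        · intro h; exact absurd (Finset.mem_univ i) h
      · rw [Finset.sum_eq_zero]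
        · simp [hdμapp]
        · intro b _
          rw [Finsupp.single_apply, if_neg (by simp)]
    rw [Finset.prod_congr rfl fun i _ => h1 i, Stmt1Aux.prod_monomial_one, hd]
  have hνprod : (∏ j : Fin t, X (Sum.inr j) ^ ν j : MvPolynomial σ k)
      = monomial dν 1 := by
    have h1 : ∀ j : Fin t, (X (Sum.inr j) ^ ν j : MvPolynomial σ k)
        = monomial (Finsupp.single (Sum.inr j) (ν j)) 1 := fun j =>
      MvPolynomial.X_pow_eq_monomial
    have hd : (∑ j : Fin t, Finsupp.single (Sum.inr j : σ) (ν j)) = dν := by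
      ext x
      rw [Finsupp.finset_sum_apply]
      rcases x with i | j
      · rw [Finset.sum_eq_zero]
        · simp [hdνapp]
        · intro b _
          rw [Finsupp.single_apply, if_neg (by simp)]
      · rw [Finset.sum_eq_single j]
        · simp [hdνapp]
        · intro b _ hb
          rw [Finsupp.single_apply, if_neg (by simpa using hb)]
        · intro h; exact absurd (Finset.mem_univ j) h
    rw [Finset.prod_congr rfl fun j _ => h1 j, Stmt1Aux.prod_monomial_one, hd]
  rw [hμprod, hνprod]
  exact hprime.irreducible
end

section
/- Let k be an algebraically closed field of characteristic zero, let s, t ≥ 1, and let μ = (μ₁,…,μ_s) and ν = (ν₁,…,ν_t) be tuples of positive integers. Then the quotient ring k[x₁,…,x_s,y₁,…,y_t] / (x^μ − y^ν) of the polynomial ring by the principal ideal generated by x^μ − y^ν is a reduced ring; equivalently, the polynomial x^μ − y^ν is squarefree in k[x₁,…,x_s,y₁,…,y_t]. -/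
open MvPolynomial

lemma aux_prime_X {σ : Type*} {k : Type*} [Field k] (i : σ) :
    Prime (X i : MvPolynomial σ k) := by
  classical
  let e : MvPolynomial σ k ≃ₐ[k] Polynomial (MvPolynomial {b : σ // b ≠ i} k) :=
    (renameEquiv k (Equiv.optionSubtypeNe i).symm).trans (optionEquivLeft k _)
  have hX : e (X i) = Polynomial.X := by
    simp [e, renameEquiv_apply, rename_X, Equiv.optionSubtypeNe_symm_self,
      optionEquivLeft]
  have := (MulEquiv.prime_iff e.toRingEquiv.toMulEquiv (p := (X i : MvPolynomial σ k))).mp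
  rw [show (e.toRingEquiv.toMulEquiv) (X i) = Polynomial.X from hX] at this
  exact this Polynomial.prime_X

lemma aux_pderiv_prod_zero {σ ι : Type*} {k : Type*} [Field k] (v : σ)
    (s : Finset ι) (f : ι → MvPolynomial σ k)
    (h : ∀ i ∈ s, pderiv v (f i) = 0) :
    pderiv v (∏ i ∈ s, f i) = 0 := by
  classical
  induction s using Finset.induction_on with
  | empty => simp
  | insert a s' hni ih =>
    rw [Finset.prod_insert hni, pderiv_mul, h a (Finset.mem_insert_self a s'),
      ih fun i hi => h i (Finset.mem_insert_of_mem hi)]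
    ring

/-- Let `k` be an algebraically closed field of characteristic zero, `s, t ≥ 1`, and let
`μ`, `ν` be tuples of positive integers. Then `k[x,y]/(x^μ − y^ν)` is a reduced ring;
equivalently, the polynomial `x^μ − y^ν` is squarefree. -/
theorem stmt_3 {k : Type*} [Field k] [IsAlgClosed k] [CharZero k]
    (s t : ℕ) (hs : 1 ≤ s) (ht : 1 ≤ t)
    (μ : Fin s → ℕ) (ν : Fin t → ℕ)
    (hμ : ∀ i, 0 < μ i) (hν : ∀ j, 0 < ν j) :
    IsReduced
      (MvPolynomial (Fin s ⊕ Fin t) k ⧸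
        Ideal.span
          {((∏ i : Fin s, X (Sum.inl i) ^ μ i) - ∏ j : Fin t, X (Sum.inr j) ^ ν j :
            MvPolynomial (Fin s ⊕ Fin t) k)})
    ∧ Squarefree
        ((∏ i : Fin s, X (Sum.inl i) ^ μ i) - ∏ j : Fin t, X (Sum.inr j) ^ ν j :
          MvPolynomial (Fin s ⊕ Fin t) k) := by
  classical
  set A : MvPolynomial (Fin s ⊕ Fin t) k := ∏ i : Fin s, X (Sum.inl i) ^ μ i with hA
  set B : MvPolynomial (Fin s ⊕ Fin t) k := ∏ j : Fin t, X (Sum.inr j) ^ ν j with hB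
  obtain ⟨i₀⟩ : Nonempty (Fin s) := ⟨⟨0, hs⟩⟩
  obtain ⟨j₀⟩ : Nonempty (Fin t) := ⟨⟨0, ht⟩⟩
  -- the evaluation at (x := 0, y := 1)
  set ev : MvPolynomial (Fin s ⊕ Fin t) k →+* k :=
    eval (Sum.elim (fun _ => (0:k)) (fun _ => (1:k))) with hev
  have hevA : ev A = 0 := by
    rw [hA]
    rw [map_prod]
    refine Finset.prod_eq_zero (Finset.mem_univ i₀) ?_
    simp [ev, zero_pow (hμ i₀).ne']
  have hevB : ev B = 1 := by
    rw [hB, map_prod]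
    simp [ev]
  have hf0 : A - B ≠ 0 := by
    intro h
    have : ev (A - B) = 0 := by rw [h]; simp
    rw [map_sub, hevA, hevB] at this
    simp at this
  -- squarefreeness
  have hsq : Squarefree (A - B) := by
    intro p hp
    by_contra hpu
    have hp0 : p ≠ 0 := by rintro rfl; exact hf0 (zero_dvd_iff.mp (by simpa using hp))
    -- p divides the derivative
    obtain ⟨g, hg⟩ := hp
    have hpd : p ∣ pderiv (Sum.inl i₀) (A - B) := by
      rw [hg, show p * p * g = p * (p * g) by ring, pderiv_mul]
      exact dvd_add ((dvd_mul_right p g).mul_left _) (dvd_mul_right _ _)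
    -- compute the derivative
    have hdB : pderiv (Sum.inl i₀) B = 0 := by
      refine aux_pderiv_prod_zero _ _ _ fun j _ => ?_
      rw [pderiv_pow, pderiv_X_of_ne (by simp)]
      ring
    have hArw : A = X (Sum.inl i₀) ^ μ i₀ * ∏ i ∈ Finset.univ.erase i₀, X (Sum.inl i) ^ μ i := by
      rw [hA]
      exact (Finset.mul_prod_erase _ _ (Finset.mem_univ i₀)).symm
    have hdA : pderiv (Sum.inl i₀) A =
        (μ i₀ : MvPolynomial (Fin s ⊕ Fin t) k) * X (Sum.inl i₀) ^ (μ i₀ - 1) *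
          ∏ i ∈ Finset.univ.erase i₀, X (Sum.inl i) ^ μ i := by
      rw [hArw, pderiv_mul, aux_pderiv_prod_zero _ _ _ fun i hi => ?_, pderiv_pow,
        pderiv_X_self]
      · ring
      · rw [pderiv_pow, pderiv_X_of_ne (by simp [Finset.ne_of_mem_erase hi])]
        ring
    have hXd : X (Sum.inl i₀) * pderiv (Sum.inl i₀) (A - B) =
        (μ i₀ : MvPolynomial (Fin s ⊕ Fin t) k) * A := by
      rw [map_sub, hdB, sub_zero, hdA, hArw]
      rw [show X (Sum.inl i₀) * ((μ i₀ : MvPolynomial (Fin s ⊕ Fin t) k) *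
          X (Sum.inl i₀) ^ (μ i₀ - 1) * ∏ i ∈ Finset.univ.erase i₀, X (Sum.inl i) ^ μ i)
          = (μ i₀ : MvPolynomial (Fin s ⊕ Fin t) k) *
          (X (Sum.inl i₀) * X (Sum.inl i₀) ^ (μ i₀ - 1)) *
          ∏ i ∈ Finset.univ.erase i₀, X (Sum.inl i) ^ μ i from by ring]
      rw [← pow_succ', Nat.sub_add_cancel (hμ i₀)]
      ring
    have hμunit : IsUnit ((μ i₀ : MvPolynomial (Fin s ⊕ Fin t) k)) := by
      rw [show ((μ i₀ : MvPolynomial (Fin s ⊕ Fin t) k)) = C ((μ i₀ : k)) by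
        simp]
      have hk : ((μ i₀ : k)) ≠ 0 := Nat.cast_ne_zero.mpr (hμ i₀).ne'
      exact IsUnit.of_mul_eq_one (C ((μ i₀ : k))⁻¹) (by
        rw [← C_mul, mul_inv_cancel₀ hk, C_1])
    have hpA : p ∣ A := by
      have : p ∣ (μ i₀ : MvPolynomial (Fin s ⊕ Fin t) k) * A := by
        rw [← hXd]; exact Dvd.dvd.mul_left hpd _
      exact (hμunit.dvd_mul_left).mp this
    have hpf : p ∣ A - B := ⟨p * g, by rw [hg]; ring⟩
    have hpB : p ∣ B := (dvd_sub_right hpA).mp hpf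
    -- take an irreducible factor of p
    obtain ⟨q, hqirr, hqp⟩ := WfDvdMonoid.exists_irreducible_factor hpu hp0
    have hqprime : Prime q := hqirr.prime
    have hqA : q ∣ A := hqp.trans hpA
    have hqB : q ∣ B := hqp.trans hpB
    obtain ⟨i, -, hqi⟩ := hqprime.exists_mem_finset_dvd (by rw [hA] at hqA; exact hqA)
    obtain ⟨j, -, hqj⟩ := hqprime.exists_mem_finset_dvd (by rw [hB] at hqB; exact hqB)
    have hqXi : q ∣ X (Sum.inl i) := hqprime.dvd_of_dvd_pow hqi
    have hqXj : q ∣ X (Sum.inr j) := hqprime.dvd_of_dvd_pow hqj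
    have hassoc : Associated q (X (Sum.inl i)) :=
      hqirr.associated_of_dvd (aux_prime_X _).irreducible hqXi
    have hXij : (X (Sum.inl i) : MvPolynomial (Fin s ⊕ Fin t) k) ∣ X (Sum.inr j) :=
      hassoc.symm.dvd.trans hqXj
    obtain ⟨c, hc⟩ := hXij
    have := congrArg ev hc
    simp [ev] at this
  refine ⟨?_, hsq⟩
  rw [← Ideal.isRadical_iff_quotient_reduced, ← isRadical_iff_span_singleton]
  exact hsq.isRadical
end

section
/- Let k be an algebraically closed field of characteristic zero, let s, t ≥ 1, let μ = (μ₁,…,μ_s) and ν = (ν₁,…,ν_t) be tuples of positive integers, and let p = x^μ − y^ν in k[x₁,…,x_s,y₁,…,y_t]. Suppose F ∈ k[x₁,…,x_s,y₁,…,y_t] divides p and is semi-invariant under all root-of-unity scalings of the variables: for each index i ∈ {1,…,s} and each μ_i-th root of unity ζ ∈ k, the k-algebra automorphism sending x_i to ζ·x_i and fixing all other variables sends F to c·F for some c ∈ k^×, and likewise for each index j ∈ {1,…,t} and each ν_j-th root of unity ζ ∈ k, the automorphism sending y_j to ζ·y_j and fixing all other variables sends F to c·F for some c ∈ k^×. Then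 F lies in the k-subalgebra k[x₁^{μ₁},…,x_s^{μ_s},y₁^{ν₁},…,y_t^{ν_t}] of k[x₁,…,x_s,y₁,…,y_t]; that is, F is genuinely invariant under all these automorphisms. -/
open MvPolynomial

section Aux

variable {R : Type*} [CommSemiring R] {σ : Type*} [DecidableEq σ]

lemma scale_monomial (w₀ : σ) (ζ : R) (u : σ →₀ ℕ) (a : R) :
    aeval (fun w => if w = w₀ then C ζ * X w else (X w : MvPolynomial σ R)) (monomial u a)
      = C (ζ ^ u w₀) * monomial u a := by
  rw [aeval_monomial, monomial_eq]
  have h1 : (u.prod fun n e => (if n = w₀ then C ζ * X n else (X n : MvPolynomial σ R)) ^ e)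
      = (∏ n ∈ u.support, (if n = w₀ then (C ζ : MvPolynomial σ R) else 1) ^ u n)
        * ∏ n ∈ u.support, (X n : MvPolynomial σ R) ^ u n := by
    rw [Finsupp.prod, ← Finset.prod_mul_distrib]
    refine Finset.prod_congr rfl fun n _ => ?_
    split_ifs with h
    · rw [mul_pow]
    · rw [one_pow, one_mul]
  have h2 : (∏ n ∈ u.support, (if n = w₀ then (C ζ : MvPolynomial σ R) else 1) ^ u n)
      = C (ζ ^ u w₀) := by
    have : (∏ n ∈ u.support, (if n = w₀ then (C ζ : MvPolynomial σ R) else 1) ^ u n)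
        = ∏ n ∈ u.support, (if n = w₀ then (C ζ : MvPolynomial σ R) ^ u n else 1) := by
      refine Finset.prod_congr rfl fun n _ => ?_
      split_ifs <;> simp
    rw [this, Finset.prod_ite_eq' u.support w₀ (fun n => (C ζ : MvPolynomial σ R) ^ u n)]
    split_ifs with h
    · rw [← C_pow]
    · rw [Finsupp.notMem_support_iff.mp h, pow_zero, map_one]
  rw [h1, h2, Finsupp.prod, algebraMap_eq]
  ring

lemma coeff_scale (w₀ : σ) (ζ : R) (F : MvPolynomial σ R) (d : σ →₀ ℕ) :
    coeff d (aeval (fun w => if w = w₀ then C ζ * X w else (X w : MvPolynomial σ R)) F)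
      = ζ ^ d w₀ * coeff d F := by
  induction F using MvPolynomial.induction_on' with
  | monomial u a =>
    rw [scale_monomial, coeff_C_mul, coeff_monomial]
    split_ifs with h
    · subst h; ring
    · ring
  | add p q hp hq =>
    rw [map_add, coeff_add, coeff_add, hp, hq, mul_add]

lemma subst_zero_eq_zero (w₀ : σ) (F : MvPolynomial σ R)
    (hF : ∀ d ∈ F.support, d w₀ ≠ 0) :
    aeval (fun w => if w = w₀ then 0 else (X w : MvPolynomial σ R)) F = 0 := by
  conv_lhs => rw [F.as_sum]
  rw [map_sum]
  refine Finset.sum_eq_zero fun d hd => ?_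
  rw [aeval_monomial, Finsupp.prod]
  have hw : w₀ ∈ d.support := Finsupp.mem_support_iff.mpr (hF d hd)
  rw [Finset.prod_eq_zero hw (by simp [zero_pow (hF d hd)]), mul_zero]

end Aux

section Key

variable {K : Type*} [Field K] {σ : Type*} [DecidableEq σ]

lemma key_dvd (w₀ : σ) (m : ℕ) (ζ : K) (hζ : IsPrimitiveRoot ζ m)
    (F : MvPolynomial σ K)
    (hd0 : ∃ d0 ∈ F.support, d0 w₀ = 0)
    (hsemi : ∃ c : K, c ≠ 0 ∧
      aeval (fun w => if w = w₀ then C ζ * X w else (X w : MvPolynomial σ K)) F = C c * F) :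
    ∀ d ∈ F.support, m ∣ d w₀ := by
  obtain ⟨c, hc, heq⟩ := hsemi
  have hcoeff : ∀ d ∈ F.support, ζ ^ d w₀ = c := by
    intro d hd
    have := congrArg (coeff d) heq
    rw [coeff_scale, coeff_C_mul] at this
    exact mul_right_cancel₀ (MvPolynomial.mem_support_iff.mp hd) this
  obtain ⟨d0, hd0m, hd00⟩ := hd0
  have hc1 : c = 1 := by
    have := hcoeff d0 hd0m
    rw [hd00, pow_zero] at this; exact this.symm
  intro d hd
  exact (hζ.pow_eq_one_iff_dvd _).mp (by rw [hcoeff d hd, hc1])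

end Key
/-- existence of a support element with zero exponent at `w₀`, from divisibility. -/
lemma exists_zero_exp {K : Type*} [Field K] {σ : Type*} [DecidableEq σ]
    (w₀ : σ) (F p : MvPolynomial σ K) (hdvd : F ∣ p)
    (hp : aeval (fun w => if w = w₀ then 0 else (X w : MvPolynomial σ K)) p ≠ 0) :
    ∃ d0 ∈ F.support, d0 w₀ = 0 := by
  obtain ⟨G, hG⟩ := hdvd
  by_contra hcon
  push_neg at hcon
  have hF0 := subst_zero_eq_zero w₀ F hcon
  apply hp
  rw [hG, map_mul, hF0, zero_mul]

/-- Let `p = x^μ − y^ν` in `k[x₁,…,x_s,y₁,…,y_t]` over an algebraically closed field `k`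
of characteristic zero. If `F ∣ p` and `F` is semi-invariant (up to a nonzero scalar)
under every root-of-unity scaling of a single variable (`x_i ↦ ζ·x_i` for `ζ^{μ_i} = 1`,
resp. `y_j ↦ ζ·y_j` for `ζ^{ν_j} = 1`), then `F` lies in the subalgebra
`k[x₁^{μ₁},…,x_s^{μ_s},y₁^{ν₁},…,y_t^{ν_t}]`; that is, `F` is genuinely invariant under
all these automorphisms. -/
theorem stmt_4 {k : Type*} [Field k] [IsAlgClosed k] [CharZero k]
    (s t : ℕ) (hs : 1 ≤ s) (ht : 1 ≤ t)
    (μ : Fin s → ℕ) (ν : Fin t → ℕ)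
    (hμ : ∀ i, 0 < μ i) (hν : ∀ j, 0 < ν j)
    (F : MvPolynomial (Fin s ⊕ Fin t) k)
    (hdvd : F ∣ ((∏ i : Fin s, X (Sum.inl i) ^ μ i) - ∏ j : Fin t, X (Sum.inr j) ^ ν j))
    (hx : ∀ (i : Fin s) (ζ : k), ζ ^ μ i = 1 →
      ∃ c : k, c ≠ 0 ∧
        aeval (fun w : Fin s ⊕ Fin t =>
          if w = Sum.inl i then C ζ * X w else (X w : MvPolynomial (Fin s ⊕ Fin t) k)) F
          = C c * F)
    (hy : ∀ (j : Fin t) (ζ : k), ζ ^ ν j = 1 →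
      ∃ c : k, c ≠ 0 ∧
        aeval (fun w : Fin s ⊕ Fin t =>
          if w = Sum.inr j then C ζ * X w else (X w : MvPolynomial (Fin s ⊕ Fin t) k)) F
          = C c * F) :
    F ∈ Algebra.adjoin k
        ((Set.range fun i : Fin s =>
            (X (Sum.inl i) : MvPolynomial (Fin s ⊕ Fin t) k) ^ μ i) ∪
          (Set.range fun j : Fin t =>
            (X (Sum.inr j) : MvPolynomial (Fin s ⊕ Fin t) k) ^ ν j))
    ∧ (∀ (i : Fin s) (ζ : k), ζ ^ μ i = 1 →
        aeval (fun w : Fin s ⊕ Fin t =>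
          if w = Sum.inl i then C ζ * X w else (X w : MvPolynomial (Fin s ⊕ Fin t) k)) F
          = F)
    ∧ (∀ (j : Fin t) (ζ : k), ζ ^ ν j = 1 →
        aeval (fun w : Fin s ⊕ Fin t =>
          if w = Sum.inr j then C ζ * X w else (X w : MvPolynomial (Fin s ⊕ Fin t) k)) F
          = F) := by
  set p : MvPolynomial (Fin s ⊕ Fin t) k :=
    (∏ i : Fin s, X (Sum.inl i) ^ μ i) - ∏ j : Fin t, X (Sum.inr j) ^ ν j with hp
  -- the zero substitutions of p are nonzero
  have hpx : ∀ i : Fin s,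
      aeval (fun w => if w = Sum.inl i then 0 else (X w : MvPolynomial (Fin s ⊕ Fin t) k)) p
        ≠ 0 := by
    intro i
    rw [hp, map_sub, map_prod, map_prod]
    have h1 : (∏ i' : Fin s, (aeval (fun w => if w = Sum.inl i then 0
        else (X w : MvPolynomial (Fin s ⊕ Fin t) k))) ((X (Sum.inl i') : MvPolynomial (Fin s ⊕ Fin t) k) ^ μ i')) = 0 := by
      apply Finset.prod_eq_zero (Finset.mem_univ i)
      rw [map_pow, aeval_X, if_pos rfl]
      exact zero_pow (hμ i).ne'
    have h2 : (∏ j : Fin t, (aeval (fun w => if w = Sum.inl i then 0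
        else (X w : MvPolynomial (Fin s ⊕ Fin t) k))) ((X (Sum.inr j) : MvPolynomial (Fin s ⊕ Fin t) k) ^ ν j))
        = ∏ j : Fin t, (X (Sum.inr j) : MvPolynomial (Fin s ⊕ Fin t) k) ^ ν j := by
      refine Finset.prod_congr rfl fun j _ => ?_
      rw [map_pow, aeval_X, if_neg (by simp)]
    rw [h1, h2, zero_sub, neg_ne_zero]
    exact Finset.prod_ne_zero_iff.mpr fun j _ => pow_ne_zero _ (X_ne_zero _)
  have hpy : ∀ j : Fin t,
      aeval (fun w => if w = Sum.inr j then 0 else (X w : MvPolynomial (Fin s ⊕ Fin t) k)) p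
        ≠ 0 := by
    intro j
    rw [hp, map_sub, map_prod, map_prod]
    have h1 : (∏ j' : Fin t, (aeval (fun w => if w = Sum.inr j then 0
        else (X w : MvPolynomial (Fin s ⊕ Fin t) k))) ((X (Sum.inr j') : MvPolynomial (Fin s ⊕ Fin t) k) ^ ν j')) = 0 := by
      apply Finset.prod_eq_zero (Finset.mem_univ j)
      rw [map_pow, aeval_X, if_pos rfl]
      exact zero_pow (hν j).ne'
    have h2 : (∏ i : Fin s, (aeval (fun w => if w = Sum.inr j then 0
        else (X w : MvPolynomial (Fin s ⊕ Fin t) k))) ((X (Sum.inl i) : MvPolynomial (Fin s ⊕ Fin t) k) ^ μ i))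
        = ∏ i : Fin s, (X (Sum.inl i) : MvPolynomial (Fin s ⊕ Fin t) k) ^ μ i := by
      refine Finset.prod_congr rfl fun i _ => ?_
      rw [map_pow, aeval_X, if_neg (by simp)]
    rw [h1, h2, sub_zero]
    exact Finset.prod_ne_zero_iff.mpr fun i _ => pow_ne_zero _ (X_ne_zero _)
  have hdivx : ∀ (i : Fin s) (d : (Fin s ⊕ Fin t) →₀ ℕ), d ∈ F.support →
      μ i ∣ d (Sum.inl i) := by
    intro i
    haveI : NeZero ((μ i : ℕ) : k) := ⟨Nat.cast_ne_zero.mpr (hμ i).ne'⟩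
    obtain ⟨ζ, hζ⟩ := HasEnoughRootsOfUnity.exists_primitiveRoot k (μ i)
    exact key_dvd (Sum.inl i) (μ i) ζ hζ F
      (exists_zero_exp (Sum.inl i) F p hdvd (hpx i)) (hx i ζ hζ.pow_eq_one)
  have hdivy : ∀ (j : Fin t) (d : (Fin s ⊕ Fin t) →₀ ℕ), d ∈ F.support →
      ν j ∣ d (Sum.inr j) := by
    intro j
    haveI : NeZero ((ν j : ℕ) : k) := ⟨Nat.cast_ne_zero.mpr (hν j).ne'⟩
    obtain ⟨ζ, hζ⟩ := HasEnoughRootsOfUnity.exists_primitiveRoot k (ν j)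
    exact key_dvd (Sum.inr j) (ν j) ζ hζ F
      (exists_zero_exp (Sum.inr j) F p hdvd (hpy j)) (hy j ζ hζ.pow_eq_one)
  refine ⟨?_, ?_, ?_⟩
  · rw [F.as_sum]
    refine Subalgebra.sum_mem _ fun d hd => ?_
    rw [monomial_eq, Finsupp.prod]
    refine Subalgebra.mul_mem _ ?_ (Subalgebra.prod_mem _ fun n hn => ?_)
    · rw [← algebraMap_eq]; exact Subalgebra.algebraMap_mem _ _
    · match n with
      | Sum.inl i =>
        obtain ⟨q, hq⟩ := hdivx i d hd
        rw [hq, pow_mul]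
        exact Subalgebra.pow_mem _ (Algebra.subset_adjoin (Set.mem_union_left _ (Set.mem_range_self i))) q
      | Sum.inr j =>
        obtain ⟨q, hq⟩ := hdivy j d hd
        rw [hq, pow_mul]
        exact Subalgebra.pow_mem _ (Algebra.subset_adjoin (Set.mem_union_right _ (Set.mem_range_self j))) q
  · intro i ζ hζ1
    apply MvPolynomial.ext
    intro d
    rw [coeff_scale]
    by_cases h : coeff d F = 0
    · rw [h, mul_zero]
    · obtain ⟨q, hq⟩ := hdivx i d (MvPolynomial.mem_support_iff.mpr h)
      rw [hq, pow_mul, hζ1, one_pow, one_mul]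
  · intro j ζ hζ1
    apply MvPolynomial.ext
    intro d
    rw [coeff_scale]
    by_cases h : coeff d F = 0
    · rw [h, mul_zero]
    · obtain ⟨q, hq⟩ := hdivy j d (MvPolynomial.mem_support_iff.mpr h)
      rw [hq, pow_mul, hζ1, one_pow, one_mul]
end
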